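/- Let G be a finite abelian group of cardinality N and let B ⊆ G be a nonempty set with |B| = βN. Assume B is k-covering for some integer k ≥ 2, and that β ≤ 14^(−k−1). Then there is a character γ of G with γ ≠ γ₀ (the principal character) such that |B̂(γ)| ≥ (1 − η)|B|, where η = 18·β^(1/k)·log(1/β)/k. -/

import Mathlib

open Pointwise

set_option maxHeartbeats 2000000
set_option linter.unusedSectionVars false

section GRAux

open Finset

set_option linter.unusedSectionVars false
set_option maxHeartbeats 1000000

variable {G : Type*} [AddCommGroup G] [DecidableEq G]

private lemma GR_addChar_map_sum {ι : Type*} (γ : AddChar G ℂ) (s : Finset ι) (f : ι → G) :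
    γ (∑ i ∈ s, f i) = ∏ i ∈ s, γ (f i) := by
  induction s using Finset.cons_induction with
  | empty => simp
  | cons a s ha ih => rw [Finset.sum_cons, Finset.prod_cons, AddChar.map_add_eq_mul, ih]

private lemma GR_sum_mem_add_nsmul (B T : Finset G) (hcov : B + B ⊆ B + (T - T)) :
    ∀ (m : ℕ) (p : Fin (m+1) → G), (∀ i, p i ∈ B) → (∑ i, p i) ∈ B + m • (T - T) := by
  intro m
  induction m with
  | zero =>
      intro p hp
      have h : (∑ i : Fin 1, p i) = p 0 := by simp
      rw [h, zero_nsmul, add_zero]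
      exact hp 0
  | succ m ih =>
      intro p hp
      have h2 : (∑ i, p i) = (∑ i : Fin (m+1), p i.castSucc) + p (Fin.last _) :=
        Fin.sum_univ_castSucc p
      have h1 := ih (fun i => p i.castSucc) (fun i => hp _)
      rw [Finset.mem_add] at h1
      obtain ⟨c, hc, s, hs, hcs⟩ := h1
      have hcb : c + p (Fin.last _) ∈ B + (T - T) := hcov (Finset.add_mem_add hc (hp _))
      rw [Finset.mem_add] at hcb
      obtain ⟨c', hc', s', hs', hcs'⟩ := hcb
      rw [Finset.mem_add]
      refine ⟨c', hc', s + s', ?_, ?_⟩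
      · rw [succ_nsmul]
        exact Finset.add_mem_add hs hs'
      · have h3 : c' + (s + s') = (c' + s') + s := by abel
        rw [h2, h3, hcs', ← hcs]
        abel

private lemma GR_mem_nsmul_sub_rep (T : Finset G) :
    ∀ (m : ℕ) (x : G), x ∈ m • (T - T) →
      ∃ v : {t // t ∈ T} → ℤ, (∑ t, (v t).natAbs) ≤ 2*m ∧ (∑ t, v t • (t : G)) = x := by
  intro m
  induction m with
  | zero =>
      intro x hx
      rw [zero_nsmul] at hx
      rw [Finset.mem_zero] at hx
      exact ⟨0, by simp, by simp [hx]⟩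
  | succ m ih =>
      intro x hx
      rw [succ_nsmul, Finset.mem_add] at hx
      obtain ⟨y, hy, s, hs, hys⟩ := hx
      obtain ⟨v, hv1, hv2⟩ := ih y hy
      rw [Finset.mem_sub] at hs
      obtain ⟨t₁, ht₁, t₂, ht₂, hts⟩ := hs
      let δ : {t // t ∈ T} → {t // t ∈ T} → ℤ := fun a t => if t = a then 1 else 0
      have hδabs : ∀ a, (∑ t, (δ a t).natAbs) = 1 := by
        intro a
        have : ∀ t, (δ a t).natAbs = if t = a then 1 else 0 := by
          intro t; by_cases h : t = a <;> simp [δ, h]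
        simp only [this]
        simp
      have hδsum : ∀ a : {t // t ∈ T}, (∑ t, (δ a t) • (t : G)) = (a : G) := by
        intro a
        rw [Finset.sum_eq_single a]
        · simp [δ]
        · intro b _ hb; simp [δ, hb]
        · intro h; exact absurd (Finset.mem_univ _) h
      refine ⟨v + δ ⟨t₁, ht₁⟩ - δ ⟨t₂, ht₂⟩, ?_, ?_⟩
      · calc (∑ t, ((v + δ ⟨t₁, ht₁⟩ - δ ⟨t₂, ht₂⟩) t).natAbs)
            ≤ ∑ t, ((v t).natAbs + (δ ⟨t₁, ht₁⟩ t).natAbs + (δ ⟨t₂, ht₂⟩ t).natAbs) := by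
              apply Finset.sum_le_sum
              intro t _
              simp only [Pi.sub_apply, Pi.add_apply]
              have h1 := Int.natAbs_sub_le (v t + δ ⟨t₁, ht₁⟩ t) (δ ⟨t₂, ht₂⟩ t)
              have h2 := Int.natAbs_add_le (v t) (δ ⟨t₁, ht₁⟩ t)
              omega
          _ ≤ 2*(m+1) := by
              rw [Finset.sum_add_distrib, Finset.sum_add_distrib, hδabs, hδabs]
              omega
      · calc (∑ t, ((v + δ ⟨t₁, ht₁⟩ - δ ⟨t₂, ht₂⟩) t) • (t : G))
            = (∑ t, v t • (t:G)) + (∑ t, (δ ⟨t₁, ht₁⟩ t) • (t : G))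
              - (∑ t, (δ ⟨t₂, ht₂⟩ t) • (t : G)) := by
              simp only [Pi.sub_apply, Pi.add_apply, sub_smul, add_smul,
                Finset.sum_sub_distrib, Finset.sum_add_distrib]
          _ = x := by
              rw [hδsum ⟨t₁, ht₁⟩, hδsum ⟨t₂, ht₂⟩, hv2, ← hys, ← hts]
              simp only []
              abel

private lemma GR_card_nsmul_sub_le (T : Finset G) (m : ℕ) :
    (m • (T - T)).card ≤ 2 ^ T.card * (2*m + T.card).choose T.card := by
  classical
  set κ := T.card with hκ
  have hcardι : Fintype.card {t // t ∈ T} = κ := Fintype.card_coe T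
  set V : Finset ({t // t ∈ T} → ℤ) :=
    (Fintype.piFinset fun _ => Finset.Icc (-(2*m : ℤ)) (2*m)).filter
      (fun v => (∑ t, (v t).natAbs) ≤ 2*m) with hV
  have hsub : m • (T - T) ⊆ V.image (fun v : {t // t ∈ T} → ℤ => ∑ t : {t // t ∈ T}, v t • (t : G)) := by
    intro x hx
    obtain ⟨v, hv1, hv2⟩ := GR_mem_nsmul_sub_rep T m x hx
    refine Finset.mem_image.2 ⟨v, ?_, hv2⟩
    rw [hV, Finset.mem_filter]
    refine ⟨Fintype.mem_piFinset.2 fun t => ?_, hv1⟩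
    have h1 : (v t).natAbs ≤ 2*m := le_trans (Finset.single_le_sum
      (f := fun t => (v t).natAbs) (fun _ _ => Nat.zero_le _) (Finset.mem_univ t)) hv1
    rw [Finset.mem_Icc]
    omega
  have h1 : (m • (T - T)).card ≤ V.card :=
    le_trans (Finset.card_le_card hsub) (Finset.card_image_le)
  have h2 : V.card ≤ 2 ^ κ * (2*m + κ).choose κ := by
    have hinj : V.card ≤ ((univ : Finset ({t // t ∈ T} → Bool)) ×ˢ
        (Finset.piAntidiag (univ : Finset (Option {t // t ∈ T})) (2*m))).card := by
      apply Finset.card_le_card_of_injOn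
        (fun v => (fun t => decide (v t < 0),
          fun o => Option.elim o (2*m - ∑ t, (v t).natAbs) (fun t => (v t).natAbs)))
      · intro v hv
        rw [Finset.mem_coe, hV, Finset.mem_filter] at hv
        rw [Finset.mem_coe, Finset.mem_product]
        refine ⟨Finset.mem_univ _, ?_⟩
        rw [Finset.mem_piAntidiag]
        constructor
        · rw [Fintype.sum_option]
          simp only [Option.elim]
          omega
        · intro i _; exact Finset.mem_univ i
      · intro v hv w hw he
        have h1 : ∀ t, (v t).natAbs = (w t).natAbs := by
          intro t
          have := congrArg (fun q => q.2 (some t)) he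
          simpa using this
        have h2 : ∀ t, (decide (v t < 0)) = (decide (w t < 0)) := by
          intro t
          have := congrArg (fun q => q.1 t) he
          simpa using this
        funext t
        have hs := h2 t
        rw [decide_eq_decide] at hs
        have := h1 t
        omega
    refine le_trans hinj ?_
    rw [Finset.card_product]
    have hbool : (univ : Finset ({t // t ∈ T} → Bool)).card = 2 ^ κ := by
      rw [Finset.card_univ, Fintype.card_fun, hcardι, Fintype.card_bool]
    have hpi : (Finset.piAntidiag (univ : Finset (Option {t // t ∈ T})) (2*m)).card
        ≤ (2*m + κ).choose κ := by
      have hmap := Finset.map_sym_eq_piAntidiag (univ : Finset (Option {t // t ∈ T})) (2*m)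
      have heq : (Finset.piAntidiag (univ : Finset (Option {t // t ∈ T})) (2*m)).card
          = ((univ : Finset (Option {t // t ∈ T})).sym (2*m)).card := by
        rw [← hmap, Finset.card_map]
      rw [heq]
      have hle : ((univ : Finset (Option {t // t ∈ T})).sym (2*m)).card
          ≤ Fintype.card (Sym (Option {t // t ∈ T}) (2*m)) := Finset.card_le_univ _
      refine le_trans hle ?_
      rw [Sym.card_sym_eq_choose]
      have hoc : Fintype.card (Option {t // t ∈ T}) = κ + 1 := by
        rw [Fintype.card_option, hcardι]
      rw [hoc]
      have he2 : κ + 1 + 2*m - 1 = 2*m + κ := by omega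
      rw [he2]
      rw [Nat.choose_symm_add]
    rw [hbool]
    exact Nat.mul_le_mul_left _ hpi
  exact le_trans h1 h2

variable [Fintype G]

private lemma GR_conj_sum_addChar (B : Finset G) (γ : AddChar G ℂ) :
    (starRingEnd ℂ) (∑ b ∈ B, γ b) = ∑ b ∈ B, γ (-b) := by
  rw [map_sum]
  refine Finset.sum_congr rfl fun b _ => ?_
  rw [AddChar.map_neg_eq_inv, AddChar.inv_apply_eq_conj]

private lemma GR_parseval_addChar (B : Finset G) :
    ∑ γ : AddChar G ℂ, (‖∑ b ∈ B, γ b‖)^2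
      = (Fintype.card G : ℝ) * B.card := by
  have key : ∑ γ : AddChar G ℂ, (((‖∑ b ∈ B, γ b‖)^2 : ℝ) : ℂ)
      = (Fintype.card G : ℂ) * B.card := by
    have e1 : ∀ γ : AddChar G ℂ, (((‖∑ b ∈ B, γ b‖)^2 : ℝ) : ℂ)
        = ∑ b ∈ B, ∑ b' ∈ B, γ (b - b') := by
      intro γ
      rw [Complex.sq_norm, ← Complex.mul_conj, GR_conj_sum_addChar, Finset.sum_mul_sum]
      refine Finset.sum_congr rfl fun b _ => Finset.sum_congr rfl fun b' _ => ?_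
      rw [← AddChar.map_add_eq_mul, sub_eq_add_neg]
    rw [Finset.sum_congr rfl fun γ _ => e1 γ]
    rw [Finset.sum_comm]
    have e2 : ∀ b, ∑ γ : AddChar G ℂ, ∑ b' ∈ B, γ (b - b')
        = ∑ b' ∈ B, ∑ γ : AddChar G ℂ, γ (b - b') := fun b => Finset.sum_comm
    rw [Finset.sum_congr rfl fun b _ => e2 b]
    have e3 : ∀ b ∈ B, ∑ b' ∈ B, ∑ γ : AddChar G ℂ, γ (b - b') = (Fintype.card G : ℂ) := by
      intro b hb
      have e4 : ∀ b' ∈ B, ∑ γ : AddChar G ℂ, γ (b - b')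
          = if b' = b then (Fintype.card G : ℂ) else 0 := by
        intro b' _
        rw [AddChar.sum_apply_eq_ite]
        congr 1
        simp [sub_eq_zero, eq_comm]
      rw [Finset.sum_congr rfl e4, Finset.sum_ite_eq' B b (fun _ => (Fintype.card G : ℂ))]
      simp [hb]
    rw [Finset.sum_congr rfl e3, Finset.sum_const]
    simp [mul_comm]
  have key2 := key
  push_cast at key2
  exact_mod_cast key2

private lemma GR_count_rep_addChar (B : Finset G) (n : ℕ) (x : G) :
    ∑ γ : AddChar G ℂ, (∑ b ∈ B, γ b)^n * γ (-x)
      = (Fintype.card G : ℂ) * (((Fintype.piFinset fun _ : Fin n => B).filter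
          (fun p => ∑ i, p i = x)).card : ℂ) := by
  have e1 : ∀ γ : AddChar G ℂ, (∑ b ∈ B, γ b)^n * γ (-x)
      = ∑ p ∈ Fintype.piFinset (fun _ : Fin n => B), γ ((∑ i, p i) - x) := by
    intro γ
    have h1 : (∑ b ∈ B, γ b)^n = ∏ _i : Fin n, (∑ b ∈ B, γ b) := by
      rw [Finset.prod_const, Finset.card_univ, Fintype.card_fin]
    rw [h1, Finset.prod_univ_sum, Finset.sum_mul]
    refine Finset.sum_congr rfl fun p _ => ?_
    rw [← GR_addChar_map_sum, ← AddChar.map_add_eq_mul, sub_eq_add_neg]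
  rw [Finset.sum_congr rfl fun γ _ => e1 γ, Finset.sum_comm]
  have e2 : ∀ p ∈ Fintype.piFinset (fun _ : Fin n => B),
      ∑ γ : AddChar G ℂ, γ ((∑ i, p i) - x)
        = if (∑ i, p i) = x then (Fintype.card G : ℂ) else 0 := by
    intro p _
    rw [AddChar.sum_apply_eq_ite]
    congr 1
    simp [sub_eq_zero]
  rw [Finset.sum_congr rfl e2, Finset.sum_ite, Finset.sum_const, Finset.sum_const]
  simp [mul_comm]

private lemma GR_pow_self_le_exp_mul_factorial : ∀ k : ℕ, (k:ℝ)^k ≤ (Real.exp 1)^k * k.factorial := by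
  intro k
  induction k with
  | zero => simp
  | succ k ih =>
      rcases Nat.eq_zero_or_pos k with hk | hk
      · subst hk
        have h : (1:ℝ) ≤ Real.exp 1 := by nlinarith [Real.exp_one_gt_d9]
        simpa using h
      · have hkR : (0:ℝ) < k := by exact_mod_cast hk
        have h1 : ((k:ℝ)+1)^k ≤ (k:ℝ)^k * Real.exp 1 := by
          have e1 : ((k:ℝ)+1) = (k:ℝ) * (1 + 1/k) := by field_simp
          have e2 : ((1:ℝ) + 1/k)^k ≤ Real.exp 1 := by
            have h3 : (1:ℝ) + 1/k ≤ Real.exp (1/k) := by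
              have := Real.add_one_le_exp (1/(k:ℝ))
              linarith
            have h4 : ((1:ℝ) + 1/k)^k ≤ (Real.exp (1/k))^k :=
              pow_le_pow_left₀ (by positivity) h3 k
            have h5 : (Real.exp (1/(k:ℝ)))^k = Real.exp 1 := by
              rw [← Real.exp_nat_mul]
              congr 1
              field_simp
            rwa [h5] at h4
          calc ((k:ℝ)+1)^k = (k:ℝ)^k * (1+1/k)^k := by rw [e1, mul_pow]
            _ ≤ (k:ℝ)^k * Real.exp 1 := by
                apply mul_le_mul_of_nonneg_left e2 (by positivity)
        have h2 : ((k:ℝ)+1)^(k+1) = ((k:ℝ)+1)^k * ((k:ℝ)+1) := pow_succ _ _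
        have hfact : (((k+1):ℕ).factorial : ℝ) = ((k:ℕ).factorial : ℝ) * ((k:ℝ)+1) := by
          rw [Nat.factorial_succ]
          push_cast
          ring
        have hcast : (((k:ℕ)+1 : ℕ) : ℝ) = (k:ℝ)+1 := by push_cast; ring
        rw [hcast, h2, pow_succ, hfact]
        have hepos : (0:ℝ) < Real.exp 1 := Real.exp_pos 1
        calc ((k:ℝ)+1)^k * ((k:ℝ)+1) ≤ ((k:ℝ)^k * Real.exp 1) * ((k:ℝ)+1) := by
              apply mul_le_mul_of_nonneg_right h1 (by positivity)
          _ ≤ ((Real.exp 1)^k * k.factorial * Real.exp 1) * ((k:ℝ)+1) := by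
              apply mul_le_mul_of_nonneg_right _ (by positivity)
              apply mul_le_mul_of_nonneg_right ih hepos.le
          _ = (Real.exp 1)^k * Real.exp 1 * (k.factorial * ((k:ℝ)+1)) := by ring

private lemma GR_log_fourteen_ge : (13:ℝ)/5 ≤ Real.log 14 := by
  rw [Real.le_log_iff_exp_le (by norm_num : (0:ℝ) < 14)]
  have h5 : (Real.exp (13/5))^5 = Real.exp 13 := by
    rw [← Real.exp_nat_mul]
    norm_num
  have h13 : Real.exp 13 = (Real.exp 1)^13 := by
    rw [← Real.exp_nat_mul]
    norm_num
  have hlt : (Real.exp 1)^13 ≤ (2.7182818286:ℝ)^13 :=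
    pow_le_pow_left₀ (Real.exp_pos 1).le Real.exp_one_lt_d9.le 13
  have hnum : (2.7182818286:ℝ)^13 ≤ 537824 := by norm_num
  have hch : (Real.exp (13/5))^5 ≤ (14:ℝ)^5 := by
    rw [h5, h13]
    calc (Real.exp 1)^13 ≤ (2.7182818286:ℝ)^13 := hlt
      _ ≤ 537824 := hnum
      _ = (14:ℝ)^5 := by norm_num
  exact le_of_pow_le_pow_left₀ (by norm_num) (by norm_num) hch

private lemma GR_choose_real_bound (M k : ℕ) (hk : 0 < k) :
    ((2^k * M.choose k : ℕ) : ℝ) ≤ (2 * Real.exp 1 * M / k)^k := by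
  have hkR : (0:ℝ) < k := by exact_mod_cast hk
  have h1 : (M.choose k : ℝ) ≤ (M:ℝ)^k / (k.factorial : ℝ) := Nat.choose_le_pow_div k M
  have hfpos : (0:ℝ) < (k.factorial : ℝ) := by exact_mod_cast k.factorial_pos
  have h2 : (k:ℝ)^k ≤ (Real.exp 1)^k * k.factorial := GR_pow_self_le_exp_mul_factorial k
  push_cast
  have h3 : (2 * Real.exp 1 * M / k)^k = 2^k * ((Real.exp 1)^k * (M:ℝ)^k) / (k:ℝ)^k := by
    rw [div_pow, mul_pow, mul_pow]
    ring
  rw [h3]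
  have hM : (0:ℝ) ≤ (M:ℝ)^k := by positivity
  have key : (M:ℝ)^k / (k.factorial:ℝ) ≤ (Real.exp 1)^k * (M:ℝ)^k / (k:ℝ)^k := by
    rw [div_le_div_iff₀ hfpos (by positivity)]
    calc (M:ℝ)^k * (k:ℝ)^k ≤ (M:ℝ)^k * ((Real.exp 1)^k * k.factorial) := by
          apply mul_le_mul_of_nonneg_left h2 hM
      _ = (Real.exp 1)^k * (M:ℝ)^k * (k.factorial:ℝ) := by ring
  calc (2:ℝ)^k * (M.choose k : ℝ) ≤ 2^k * ((M:ℝ)^k / (k.factorial:ℝ)) := by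
        apply mul_le_mul_of_nonneg_left h1 (by positivity)
    _ ≤ 2^k * ((Real.exp 1)^k * (M:ℝ)^k / (k:ℝ)^k) := by
        apply mul_le_mul_of_nonneg_left key (by positivity)
    _ = 2^k * ((Real.exp 1)^k * (M:ℝ)^k) / (k:ℝ)^k := by ring

private lemma GR_main_numeric (k : ℕ) (hk : 2 ≤ k) (Ex M : ℝ) (hEx : 46.8 ≤ Ex)
    (hM : M ≤ 4 + k + k*Ex/9) : 2*Real.exp 1*M < k * Ex := by
  have he := Real.exp_one_lt_d9
  have hepos := (Real.exp_pos 1).le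
  have hkR : (2:ℝ) ≤ k := by exact_mod_cast hk
  have h1 : 2*Real.exp 1*M ≤ 2*Real.exp 1*(4 + k + k*Ex/9) := by
    apply mul_le_mul_of_nonneg_left hM (by positivity)
  refine lt_of_le_of_lt h1 ?_
  nlinarith [mul_nonneg (sub_nonneg.2 hkR) (sub_nonneg.2 hEx),
    mul_nonneg (mul_nonneg (sub_nonneg.2 hkR) (sub_nonneg.2 hEx)) hepos,
    mul_le_mul_of_nonneg_left he.le (mul_nonneg (by linarith : (0:ℝ) ≤ (k:ℝ)) (by linarith : (0:ℝ) ≤ Ex)),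
    Real.exp_pos 1]

end GRAux

/-- **Lemma 10** (Green–Ruzsa). Let `G` be a finite abelian group of cardinality `N`
and `B ⊆ G` nonempty with `|B| = βN`. If `B` is `k`-covering for some integer `k ≥ 2`
and `β ≤ 14^(−k−1)`, then there is a nontrivial character `γ` of `G` with
`|B̂(γ)| ≥ (1 − η)|B|`, where `η = 18 β^(1/k) log(1/β) / k`. -/
theorem large_fourier_coefficient_of_covering {G : Type*} [AddCommGroup G] [Fintype G]
    [DecidableEq G] (N : ℕ) (hN : Fintype.card G = N)
    (B : Finset G) (hB : B.Nonempty) (β : ℝ) (hβcard : (B.card : ℝ) = β * N)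
    (k : ℕ) (hk : 2 ≤ k)
    (hcov : ∃ T : Finset G, T.card = k ∧ B + B ⊆ B + (T - T))
    (hβ : β ≤ (14 : ℝ) ^ (-(k : ℝ) - 1)) :
    ∃ γ : AddChar G ℂ, γ ≠ 1 ∧
      (1 - 18 * β ^ ((1 : ℝ) / k) * Real.log (1 / β) / k) * B.card ≤
        ‖∑ b ∈ B, γ b‖ := by
  classical
  obtain ⟨T, hTcard, hTcov⟩ := hcov
  have hkpos : 0 < k := by omega
  have hkR : (0:ℝ) < k := by exact_mod_cast hkpos
  have hNpos : 0 < N := hN ▸ Fintype.card_pos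
  have hNR : (0:ℝ) < N := by exact_mod_cast hNpos
  have hBc : 0 < B.card := Finset.card_pos.2 hB
  have hBcR : (0:ℝ) < B.card := by exact_mod_cast hBc
  have hβpos : 0 < β := by
    by_contra h
    push_neg at h
    nlinarith [mul_nonneg (neg_nonneg.2 h) hNR.le]
  have hβlt1 : β < 1 := by
    refine lt_of_le_of_lt hβ ?_
    apply Real.rpow_lt_one_of_one_lt_of_neg (by norm_num)
    have h2k : (2:ℝ) ≤ k := by exact_mod_cast hk
    linarith
  set L := Real.log (1/β) with hLdef
  have hlogβ : Real.log β = -L := by rw [hLdef, one_div, Real.log_inv, neg_neg]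
  have hLpos : 0 < L := by
    rw [hLdef]
    apply Real.log_pos
    rw [lt_div_iff₀ hβpos]
    linarith
  set η := 18 * β ^ ((1:ℝ)/(k:ℝ)) * L / (k:ℝ) with hηdef
  have hL14 : ((k:ℝ)+1) * Real.log 14 ≤ L := by
    have h1 : Real.log β ≤ Real.log ((14:ℝ) ^ (-(k:ℝ)-1)) := Real.log_le_log hβpos hβ
    rw [Real.log_rpow (by norm_num : (0:ℝ) < 14)] at h1
    rw [hlogβ] at h1
    nlinarith [h1]
  set Ex := Real.exp (L / k) with hExdef
  have hExpos : 0 < Ex := Real.exp_pos _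
  have hrpow : β ^ ((1:ℝ)/(k:ℝ)) = Ex⁻¹ := by
    rw [Real.rpow_def_of_pos hβpos, hlogβ, hExdef, ← Real.exp_neg]
    congr 1
    ring
  have hηpos : 0 < η := by
    rw [hηdef, hrpow]
    positivity
  -- a nontrivial character exists
  have hNgt1 : 1 < Fintype.card G := by
    rw [hN]
    have hcard1 : (1:ℝ) ≤ (B.card:ℝ) := by exact_mod_cast hBc
    have : (1:ℝ) < N := by nlinarith
    exact_mod_cast this
  obtain ⟨a, ha⟩ := Fintype.exists_ne_of_one_lt_card hNgt1 (0:G)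
  obtain ⟨γ₁, hγ₁⟩ := AddChar.exists_apply_ne_zero.2 ha
  have hγ₁ne : γ₁ ≠ 1 := by
    intro h
    apply hγ₁
    rw [h]
    simp
  by_cases hηc : 1 ≤ η
  · refine ⟨γ₁, hγ₁ne, ?_⟩
    refine le_trans (mul_nonpos_of_nonpos_of_nonneg (by linarith) (by positivity)) ?_
    exact norm_nonneg _
  push_neg at hηc
  by_contra hcon
  push_neg at hcon
  have habs_le : ∀ γ : AddChar G ℂ, γ ≠ 1 →
      ‖∑ b ∈ B, γ b‖ ≤ (1-η) * B.card := by
    intro γ hγ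
    exact (hcon γ hγ).le
  set m₀ := ⌈L/η⌉₊ with hm₀def
  have hBhat1 : (∑ b ∈ B, (1 : AddChar G ℂ) b) = (B.card : ℂ) := by simp
  have hpars : ∑ γ : AddChar G ℂ, (‖∑ b ∈ B, γ b‖)^2 = (N:ℝ) * B.card := by
    rw [GR_parseval_addChar B, hN]
  have herase : ∑ γ ∈ (Finset.univ.erase (1:AddChar G ℂ)), (‖∑ b ∈ B, γ b‖)^2
      = (N:ℝ) * B.card - (B.card:ℝ)^2 := by
    have h := Finset.add_sum_erase Finset.univ
      (fun γ : AddChar G ℂ => (‖∑ b ∈ B, γ b‖)^2) (Finset.mem_univ 1)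
    rw [hpars] at h
    have h1 : (‖∑ b ∈ B, (1:AddChar G ℂ) b‖)^2 = (B.card:ℝ)^2 := by
      rw [hBhat1]
      rw [Complex.norm_natCast]
    rw [h1] at h
    linarith
  have hdecay : (1-η)^m₀ ≤ β := by
    have h1 : (1-η) ≤ Real.exp (-η) := by
      have := Real.add_one_le_exp (-η)
      linarith
    have h2 : (1-η)^m₀ ≤ (Real.exp (-η))^m₀ := pow_le_pow_left₀ (by linarith) h1 m₀
    have h3 : (Real.exp (-η))^m₀ = Real.exp (-(m₀ * η)) := by
      rw [← Real.exp_nat_mul]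
      ring_nf
    have h4 : L ≤ m₀ * η := by
      have hc := Nat.le_ceil (L/η)
      calc L = (L/η)*η := by field_simp
        _ ≤ m₀ * η := mul_le_mul_of_nonneg_right hc hηpos.le
    have h5 : Real.exp (-((m₀:ℝ)*η)) ≤ Real.exp (-L) := Real.exp_le_exp.2 (by linarith)
    have h6 : Real.exp (-L) = β := by
      rw [← hlogβ, Real.exp_log hβpos]
    calc (1-η)^m₀ ≤ (Real.exp (-η))^m₀ := h2
      _ = Real.exp (-((m₀:ℝ)*η)) := h3
      _ ≤ Real.exp (-L) := h5
      _ = β := h6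
  have hNgeB : (B.card:ℝ) ≤ N := by
    have h := Finset.card_le_univ B
    rw [hN] at h
    exact_mod_cast h
  -- Step A : every element of G is a sum of m₀+2 elements of B
  have stepA : ∀ x : G, ∃ p ∈ Fintype.piFinset (fun _ : Fin (m₀+2) => B), (∑ i, p i) = x := by
    intro x
    by_contra hno
    push_neg at hno
    have hc0 : ((Fintype.piFinset fun _ : Fin (m₀+2) => B).filter
        (fun p => (∑ i, p i) = x)).card = 0 := by
      rw [Finset.card_eq_zero, Finset.filter_eq_empty_iff]
      intro p hp
      exact hno p hp
    have hid := GR_count_rep_addChar B (m₀+2) x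
    rw [hc0] at hid
    norm_num at hid
    have hsplit := Finset.add_sum_erase Finset.univ
      (fun γ : AddChar G ℂ => (∑ b ∈ B, γ b)^(m₀+2) * γ (-x)) (Finset.mem_univ 1)
    rw [hid] at hsplit
    have hf1 : ((∑ b ∈ B, (1:AddChar G ℂ) b)^(m₀+2) * (1:AddChar G ℂ) (-x))
        = ((B.card:ℂ))^(m₀+2) := by
      rw [hBhat1]
      simp
    have htaileq : ∑ γ ∈ Finset.univ.erase (1:AddChar G ℂ), (∑ b ∈ B, γ b)^(m₀+2) * γ (-x)
        = -((B.card:ℂ))^(m₀+2) := by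
      have := hsplit
      rw [hf1] at this
      linear_combination this
    have htle : ‖∑ γ ∈ Finset.univ.erase (1:AddChar G ℂ),
        (∑ b ∈ B, γ b)^(m₀+2) * γ (-x)‖
        ≤ ((1-η)*B.card)^m₀ * ((N:ℝ)*B.card - (B.card:ℝ)^2) := by
      refine le_trans (norm_sum_le _ _) ?_
      have hterm : ∀ γ ∈ Finset.univ.erase (1:AddChar G ℂ),
          ‖(∑ b ∈ B, γ b)^(m₀+2) * γ (-x)‖
          ≤ ((1-η)*B.card)^m₀ * (‖∑ b ∈ B, γ b‖)^2 := by
        intro γ hγ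
        have hγne : γ ≠ 1 := (Finset.mem_erase.1 hγ).1
        rw [norm_mul, norm_pow]
        have habsx : ‖γ (-x)‖ = 1 := by
          exact AddChar.norm_apply γ _
        rw [habsx, mul_one, pow_add]
        apply mul_le_mul_of_nonneg_right _ (by positivity)
        exact pow_le_pow_left₀ (norm_nonneg _) (habs_le γ hγne) m₀
      refine le_trans (Finset.sum_le_sum hterm) ?_
      rw [← Finset.mul_sum, herase]
    rw [htaileq] at htle
    have habs_tail : ‖-((B.card:ℂ))^(m₀+2)‖ = (B.card:ℝ)^(m₀+2) := by
      rw [norm_neg]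
      rw [norm_pow, Complex.norm_natCast]
    rw [habs_tail] at htle
    have hstrict : ((1-η)*B.card)^m₀ * ((N:ℝ)*B.card - (B.card:ℝ)^2)
        < (B.card:ℝ)^(m₀+2) := by
      have e1 : ((1-η)*(B.card:ℝ))^m₀ = (1-η)^m₀ * (B.card:ℝ)^m₀ := mul_pow _ _ _
      have e2 : (1-η)^m₀ * (B.card:ℝ)^m₀ ≤ β * (B.card:ℝ)^m₀ :=
        mul_le_mul_of_nonneg_right hdecay (by positivity)
      have e3 : 0 ≤ (N:ℝ)*B.card - (B.card:ℝ)^2 := by nlinarith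
      calc ((1-η)*(B.card:ℝ))^m₀ * ((N:ℝ)*B.card - (B.card:ℝ)^2)
          ≤ (β * (B.card:ℝ)^m₀) * ((N:ℝ)*B.card - (B.card:ℝ)^2) := by
            rw [e1]
            exact mul_le_mul_of_nonneg_right e2 e3
        _ = (B.card:ℝ)^m₀ * ((β*N)*B.card - β*(B.card:ℝ)^2) := by ring
        _ = (B.card:ℝ)^m₀ * ((B.card:ℝ)*(B.card:ℝ) - β*(B.card:ℝ)^2) := by rw [← hβcard]
        _ = (B.card:ℝ)^(m₀+2) * (1-β) := by ring
        _ < (B.card:ℝ)^(m₀+2) := by nlinarith [pow_pos hBcR (m₀+2)]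
    linarith
  -- Step B : G is covered
  have stepB : (Finset.univ : Finset G) ⊆ B + (m₀+1) • (T - T) := by
    intro x _
    obtain ⟨p, hp, hpx⟩ := stepA x
    have hmem := GR_sum_mem_add_nsmul B T hTcov (m₀+1) p
      (fun i => Fintype.mem_piFinset.1 hp i)
    rwa [hpx] at hmem
  have hcount : N ≤ B.card * (2^k * (2*(m₀+1) + k).choose k) := by
    calc N = (Finset.univ : Finset G).card := by rw [Finset.card_univ, hN]
      _ ≤ (B + (m₀+1) • (T - T)).card := Finset.card_le_card stepB
      _ ≤ B.card * ((m₀+1) • (T - T)).card := Finset.card_add_le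
      _ ≤ B.card * (2^T.card * (2*(m₀+1) + T.card).choose T.card) :=
          Nat.mul_le_mul_left _ (GR_card_nsmul_sub_le T (m₀+1))
      _ = B.card * (2^k * (2*(m₀+1) + k).choose k) := by rw [hTcard]
  -- numeric contradiction
  have hL0 : L ≠ 0 := ne_of_gt hLpos
  have hEx0 : Ex ≠ 0 := ne_of_gt hExpos
  have hk0 : (k:ℝ) ≠ 0 := ne_of_gt hkR
  have hEx468 : (46.8:ℝ) ≤ Ex := by
    have hlog14 : (13:ℝ)/5 ≤ Real.log 14 := GR_log_fourteen_ge
    have h1 : (13:ℝ)/5 ≤ L/k := by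
      rw [le_div_iff₀ hkR]
      nlinarith
    have h2 : 18 * (L/k) < Ex := by
      rw [hηdef, hrpow] at hηc
      have e : 18 * Ex⁻¹ * L / k * Ex = 18 * (L/k) := by field_simp
      have h' := mul_lt_mul_of_pos_right hηc hExpos
      rw [e, one_mul] at h'
      exact h'
    nlinarith
  have hLη : L/η = (k:ℝ)*Ex/18 := by
    rw [hηdef, hrpow]
    field_simp
  have hMle : (2*((m₀:ℝ)+1)+k : ℝ) ≤ 4 + k + (k:ℝ)*Ex/9 := by
    have hceil : (m₀:ℝ) < L/η + 1 := by
      have h := Nat.ceil_lt_add_one (le_of_lt (div_pos hLpos hηpos))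
      exact_mod_cast h
    rw [hLη] at hceil
    nlinarith
  have hfinal : ((2^k * (2*(m₀+1) + k).choose k : ℕ) : ℝ) < 1/β := by
    have h1 := GR_choose_real_bound (2*(m₀+1)+k) k hkpos
    have hMcast : ((2*(m₀+1)+k : ℕ) : ℝ) = 2*((m₀:ℝ)+1)+k := by push_cast; ring
    have h2 : 2*Real.exp 1*((2*(m₀+1)+k : ℕ):ℝ) < k * Ex := by
      apply GR_main_numeric k hk Ex _ hEx468
      rw [hMcast]
      exact hMle
    have h3 : (2 * Real.exp 1 * ((2*(m₀+1)+k:ℕ):ℝ) / k) < Ex := by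
      rw [div_lt_iff₀ hkR]
      linarith
    have h4 : (2 * Real.exp 1 * ((2*(m₀+1)+k:ℕ):ℝ) / k)^k < Ex^k := by
      apply pow_lt_pow_left₀ h3 (by positivity)
      omega
    have h5 : Ex^k = 1/β := by
      rw [hExdef, ← Real.exp_nat_mul]
      have e : (k:ℝ) * (L/k) = L := by field_simp
      rw [e, hLdef, Real.exp_log (by positivity)]
    calc ((2^k * (2*(m₀+1) + k).choose k : ℕ) : ℝ)
        ≤ (2 * Real.exp 1 * ((2*(m₀+1)+k:ℕ):ℝ) / k)^k := h1
      _ < Ex^k := h4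
      _ = 1/β := h5
  have hcountR : (N:ℝ) ≤ (B.card:ℝ) * ((2^k * (2*(m₀+1)+k).choose k : ℕ):ℝ) := by
    exact_mod_cast hcount
  have hlt : (N:ℝ) < (B.card:ℝ) * (1/β) :=
    lt_of_le_of_lt hcountR (mul_lt_mul_of_pos_left hfinal hBcR)
  rw [hβcard] at hlt
  have : β * (N:ℝ) * (1/β) = N := by field_simp
  rw [this] at hlt
  exact lt_irrefl _ hlt
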